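/- Let F be an algebraically closed field and let φ ∈ F(z) be a rational function of degree d ≥ 2, with fixed-point set Fix(φ) ⊂ ℙ¹(F). Then: (a) if #Fix(φ) = 2, then #φ⁻¹(Fix(φ)) ≥ 3; and (b) if Fix(φ) = {x} is a single point, then #φ⁻¹(x) ≥ 2 and #φ⁻²(x) ≥ 3. Consequently the set T_φ, defined to be Fix(φ) if #Fix(φ) ≥ 3, φ⁻¹(Fix(φ)) if #Fix(φ) = 2, and φ⁻²(Fix(φ)) if #Fix(φ) = 1, always has cardinality at least 3. -/

import Mathlib

open MvPolynomial

noncomputable section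

/-- `PGL₂(R)`: the projective general linear group of 2×2 matrices. -/
abbrev PGL2 (R : Type*) [CommRing R] : Type _ :=
  GL (Fin 2) R ⧸ Subgroup.center (GL (Fin 2) R)

/-- The class of an invertible matrix in `PGL₂`. -/
def PGL2.mk {R : Type*} [CommRing R] (M : GL (Fin 2) R) : PGL2 R :=
  QuotientGroup.mk M

/-- The pair of linear forms attached to a 2×2 matrix. -/
def linForms {R : Type*} [CommRing R] (M : Matrix (Fin 2) (Fin 2) R) :
    Fin 2 → MvPolynomial (Fin 2) R :=
  fun i => C (M i 0) * X 0 + C (M i 1) * X 1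

/-- The matrix `M` conjugates the pair of binary forms `Φ` to `Ψ`,
i.e. `S ∘ Φ = λ · (Ψ ∘ S)` for some scalar `λ`, where `S` is the pair of
linear forms of `M`.  This is the homogeneous form of `s ∘ φ ∘ s⁻¹ = ψ`. -/
def MatConj {R : Type*} [CommRing R] (Φ Ψ : Fin 2 → MvPolynomial (Fin 2) R)
    (M : GL (Fin 2) R) : Prop :=
  ∃ c : Rˣ, ∀ i,
    bind₁ Φ (linForms (M : Matrix (Fin 2) (Fin 2) R) i) =
      C (c : R) * bind₁ (linForms (M : Matrix (Fin 2) (Fin 2) R)) (Ψ i)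

/-- `Conj_{φ,ψ}(R)`: the set of elements of `PGL₂(R)` conjugating `φ` to `ψ`. -/
def ConjSet {R : Type*} [CommRing R] (Φ Ψ : Fin 2 → MvPolynomial (Fin 2) R) :
    Set (PGL2 R) :=
  {s | ∃ M : GL (Fin 2) R, PGL2.mk M = s ∧ MatConj Φ Ψ M}

/-- `Aut_φ(R)`: the automorphism group of `φ` inside `PGL₂(R)`. -/
def AutSet {R : Type*} [CommRing R] (Φ : Fin 2 → MvPolynomial (Fin 2) R) :
    Set (PGL2 R) :=
  ConjSet Φ Φ


open scoped Classical in
/-- The projective line over a field. -/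
noncomputable abbrev P1 (F : Type*) [Field F] : Type _ :=
  Projectivization F (Fin 2 → F)

open scoped Classical in
/-- The self-map of `ℙ¹(F)` induced by a pair of binary forms (with a junk
value at any point where both forms would vanish). -/
noncomputable def evalMap {F : Type*} [Field F]
    (Φ : Fin 2 → MvPolynomial (Fin 2) F) (p : P1 F) : P1 F :=
  if h : (fun i => MvPolynomial.eval p.rep (Φ i)) ≠ 0 then
    Projectivization.mk F _ h
  else p

/-- The set of fixed points of `φ` in `ℙ¹(F)`. -/
noncomputable def FixSet {F : Type*} [Field F]
    (Φ : Fin 2 → MvPolynomial (Fin 2) F) : Set (P1 F) :=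
  {p | evalMap Φ p = p}

open scoped Classical in
/-- The invariant set `T_φ`: the fixed points if there are at least three of
them, their first preimages if there are exactly two, and their second
preimages if there is exactly one. -/
noncomputable def Tset {F : Type*} [Field F]
    (Φ : Fin 2 → MvPolynomial (Fin 2) F) : Set (P1 F) :=
  if 3 ≤ (FixSet Φ).ncard then FixSet Φ
  else if (FixSet Φ).ncard = 2 then evalMap Φ ⁻¹' FixSet Φ
  else (evalMap Φ)^[2] ⁻¹' FixSet Φ

/-- The Möbius action of an invertible matrix on `ℙ¹(F)`. -/
noncomputable def mobius {F : Type*} [Field F] (g : GL (Fin 2) F)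
    (p : P1 F) : P1 F :=
  Projectivization.map (Matrix.toLin' (g : Matrix (Fin 2) (Fin 2) F))
    (by
      intro x y hxy
      haveI : Invertible (g : Matrix (Fin 2) (Fin 2) F) := g.invertible
      have h : ((g : Matrix (Fin 2) (Fin 2) F))⁻¹ *
          (g : Matrix (Fin 2) (Fin 2) F) = 1 :=
        Matrix.nonsing_inv_mul _ (Matrix.isUnit_det_of_invertible _)
      have hx := congrArg
        (fun z => ((g⁻¹ : GL (Fin 2) F) : Matrix (Fin 2) (Fin 2) F).mulVec z) hxy
      simpa only [Matrix.toLin'_apply, Matrix.mulVec_mulVec, Matrix.coe_units_inv, h,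
        Matrix.one_mulVec] using hx) p

namespace AuxInv

variable {F : Type*} [Field F] {n d : ℕ} {G : MvPolynomial (Fin 2) F}
  {Φ : Fin 2 → MvPolynomial (Fin 2) F}

lemma degree_sum {n : ℕ} {d : Fin 2 →₀ ℕ} (h : Finsupp.weight 1 d = n) :
    ∑ i : Fin 2, d i = n := by
  rw [Finsupp.weight_apply, Finsupp.sum_fintype] at h
  · simpa using h
  · simp

lemma eval_smul {n : ℕ} {G : MvPolynomial (Fin 2) F} (hG : G.IsHomogeneous n)
    (t : F) (v : Fin 2 → F) : eval (t • v) G = t ^ n * eval v G := by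
  rw [eval_eq', eval_eq', Finset.mul_sum]
  apply Finset.sum_congr rfl
  intro d hd
  have hsum : ∑ i : Fin 2, d i = n := degree_sum (hG (mem_support_iff.mp hd))
  calc coeff d G * ∏ i, (t • v) i ^ d i
      = coeff d G * ((∏ i, t ^ d i) * ∏ i, v i ^ d i) := by
        simp [mul_pow, Finset.prod_mul_distrib]
    _ = t ^ n * (coeff d G * ∏ i, v i ^ d i) := by
        rw [Finset.prod_pow_eq_pow_sum, hsum]; ring

/-- The linear form vanishing at `w`. -/
noncomputable def lin (w : Fin 2 → F) : MvPolynomial (Fin 2) F :=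
  C (w 1) * X 0 - C (w 0) * X 1

lemma lin_isHomogeneous (w : Fin 2 → F) : (lin w).IsHomogeneous 1 :=
  (((isHomogeneous_X F (0 : Fin 2)).C_mul (w 1)).sub
    ((isHomogeneous_X F (1 : Fin 2)).C_mul (w 0)))

lemma eval_lin (w v : Fin 2 → F) : eval v (lin w) = w 1 * v 0 - w 0 * v 1 := by
  simp [lin]

lemma lin_apply_self (w : Fin 2 → F) : eval w (lin w) = 0 := by
  simp [eval_lin, mul_comm]

lemma not_isUnit_lin {w : Fin 2 → F} (hw : w ≠ 0) : ¬ IsUnit (lin w) := by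
  intro h
  have h2 : IsUnit (eval w (lin w)) := h.map (eval w)
  rw [lin_apply_self] at h2
  exact (not_isUnit_zero : ¬ IsUnit (0 : F)) h2

lemma eval_aeval (g : Fin 2 → Polynomial F) (G : MvPolynomial (Fin 2) F) (s : F) :
    Polynomial.eval s (MvPolynomial.aeval g G) =
      eval (fun i => Polynomial.eval s (g i)) G := by
  rw [MvPolynomial.aeval_def]
  rw [show (Polynomial.eval s : Polynomial F → F) = Polynomial.evalRingHom s from rfl]
  rw [MvPolynomial.eval₂_comp_left (Polynomial.evalRingHom s)]
  have : (Polynomial.evalRingHom s).comp (algebraMap F (Polynomial F)) = RingHom.id F := by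
    ext a; simp
  rw [this]
  rfl

lemma vec_cases {v : Fin 2 → F} (hv : v ≠ 0) : v 0 ≠ 0 ∨ v 1 ≠ 0 := by
  by_contra h; push_neg at h; apply hv; funext i; fin_cases i <;> simp [h.1, h.2]

lemma one_zero_ne : (![1, 0] : Fin 2 → F) ≠ 0 := by
  intro h; simpa using congrFun h 0

lemma t_one_ne (t : F) : (![t, 1] : Fin 2 → F) ≠ 0 := by
  intro h; simpa using congrFun h 1

lemma vec_decomp1 {v : Fin 2 → F} (h : v 1 ≠ 0) : v = (v 1) • ![v 0 / v 1, 1] := by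
  funext i; fin_cases i <;> simp [mul_div_cancel₀, h] <;> field_simp

lemma vec_decomp0 {v : Fin 2 → F} (h : v 1 = 0) : v = (v 0) • ![1, 0] := by
  funext i; fin_cases i <;> simp [h]

noncomputable def chart0 (G : MvPolynomial (Fin 2) F) : Polynomial F :=
  aeval ![Polynomial.X, 1] G

noncomputable def chart1 (G : MvPolynomial (Fin 2) F) : Polynomial F :=
  aeval ![1, Polynomial.X] G

lemma chart0_eval (G : MvPolynomial (Fin 2) F) (t : F) :
    (chart0 G).eval t = eval ![t, 1] G := by
  rw [chart0, eval_aeval]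
  have h : (fun i => Polynomial.eval t (![Polynomial.X, 1] i)) = ![t, (1:F)] := by
    funext i; fin_cases i <;> simp
  rw [h]

lemma chart1_eval (G : MvPolynomial (Fin 2) F) (s : F) :
    (chart1 G).eval s = eval ![1, s] G := by
  rw [chart1, eval_aeval]
  have h : (fun i => Polynomial.eval s (![1, Polynomial.X] i)) = ![(1:F), s] := by
    funext i; fin_cases i <;> simp
  rw [h]

lemma chart1_eval_of_ne (hG : G.IsHomogeneous n) {s : F} (hs : s ≠ 0) :
    (chart1 G).eval s = s ^ n * (chart0 G).eval s⁻¹ := by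
  rw [chart1_eval, chart0_eval]
  have hv : (![1, s] : Fin 2 → F) = s • ![s⁻¹, 1] := by
    funext i; fin_cases i <;> simp [mul_inv_cancel₀ hs]
  rw [hv, eval_smul hG]

lemma eq_zero_of_eval [Infinite F] (hG : G.IsHomogeneous n)
    (h : ∀ v : Fin 2 → F, v ≠ 0 → eval v G = 0) : G = 0 := by
  have h10 : eval ![1, 0] G = 0 := h _ one_zero_ne
  have key : ∀ v : Fin 2 → F, eval v G = eval v (0 : MvPolynomial (Fin 2) F) := by
    intro v
    rcases eq_or_ne v 0 with rfl | hv
    · have h2 := eval_smul hG 0 ![1, 0]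
      rw [zero_smul, h10, mul_zero] at h2
      simpa using h2
    · simpa using h v hv
  exact MvPolynomial.funext key

lemma chart0_ne_zero [Infinite F] (hG : G.IsHomogeneous n) (hG0 : G ≠ 0) :
    chart0 G ≠ 0 := by
  intro hp
  apply hG0
  have hq : chart1 G = 0 := by
    apply Polynomial.eq_of_infinite_eval_eq
    apply Set.Infinite.mono _ ((Set.finite_singleton (0 : F)).infinite_compl)
    intro s hs
    have : (chart1 G).eval s = s ^ n * (chart0 G).eval s⁻¹ :=
      chart1_eval_of_ne hG hs
    simp only [Set.mem_setOf_eq, this, hp, Polynomial.eval_zero, mul_zero]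
  apply eq_zero_of_eval hG
  intro v hv
  by_cases h1 : v 1 = 0
  · have h0 : eval ![1, (0:F)] G = 0 := by
      rw [← chart1_eval, hq, Polynomial.eval_zero]
    rw [vec_decomp0 h1, eval_smul hG, h0, mul_zero]
  · rw [vec_decomp1 h1, eval_smul hG, ← chart0_eval, hp]
    simp

lemma exists_root [IsAlgClosed F] (hG : G.IsHomogeneous n) (hn : 1 ≤ n) :
    ∃ v : Fin 2 → F, v ≠ 0 ∧ eval v G = 0 := by
  by_cases hp : (chart0 G).degree = 0
  · set c := (chart0 G).coeff 0 with hc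
    have hpc : chart0 G = Polynomial.C c := Polynomial.eq_C_of_degree_le_zero hp.le
    have hq : chart1 G = Polynomial.C c * Polynomial.X ^ n := by
      apply Polynomial.eq_of_infinite_eval_eq
      apply Set.Infinite.mono _ ((Set.finite_singleton (0 : F)).infinite_compl)
      intro s hs
      have h2 := chart1_eval_of_ne hG (s := s) hs
      rw [hpc] at h2
      simp only [Set.mem_setOf_eq, h2]
      rw [Polynomial.eval_mul, Polynomial.eval_C, Polynomial.eval_pow, Polynomial.eval_X,
        Polynomial.eval_C]
      ring
    refine ⟨![1, 0], one_zero_ne, ?_⟩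
    have h3 := chart1_eval G (0 : F)
    rw [hq] at h3
    rw [← h3]
    simp [zero_pow (by omega : n ≠ 0)]
  · obtain ⟨t, ht⟩ := IsAlgClosed.exists_root _ hp
    exact ⟨![t, 1], t_one_ne t, by rw [← chart0_eval]; exact ht⟩

lemma weight_eq_sum (d : Fin 2 →₀ ℕ) : Finsupp.weight 1 d = ∑ i : Fin 2, d i := by
  rw [Finsupp.weight_apply, Finsupp.sum_fintype]
  · simp
  · simp

/-- Linear substitution. -/
noncomputable def lsub (a b c e : F) :
    MvPolynomial (Fin 2) F →ₐ[F] MvPolynomial (Fin 2) F :=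
  aeval ![C a * X 0 + C b * X 1, C c * X 0 + C e * X 1]

lemma lsub_X0 (a b c e : F) : lsub a b c e (X 0) = C a * X 0 + C b * X 1 := by
  simp [lsub]

lemma lsub_isHomogeneous {a b c e : F} (hG : G.IsHomogeneous n) :
    (lsub a b c e G).IsHomogeneous n := by
  have h := hG.aeval (![C a * X 0 + C b * X 1, C c * X 0 + C e * X 1] :
      Fin 2 → MvPolynomial (Fin 2) F) (n := 1)
    (fun i => by
      fin_cases i <;>
        exact (((isHomogeneous_X F _).C_mul _).add ((isHomogeneous_X F _).C_mul _)))
  rw [one_mul] at h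
  unfold lsub
  exact h

lemma eval_lsub (a b c e : F) (v : Fin 2 → F) (G : MvPolynomial (Fin 2) F) :
    eval v (lsub a b c e G) = eval ![a * v 0 + b * v 1, c * v 0 + e * v 1] G := by
  rw [lsub, aeval_def, eval₂_comp_left (eval v)]
  have h1 : (eval v).comp (algebraMap F (MvPolynomial (Fin 2) F)) = RingHom.id F := by
    ext a; simp
  rw [h1, eval₂_id]
  have h2 : (⇑(eval v) ∘ ![C a * X 0 + C b * X 1, C c * X 0 + C e * X 1] : Fin 2 → F)
      = ![a * v 0 + b * v 1, c * v 0 + e * v 1] := by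
    funext i; fin_cases i <;> simp
  rw [h2]

lemma lsub_lsub (a b c e a' b' c' e' : F) (G : MvPolynomial (Fin 2) F) :
    lsub a b c e (lsub a' b' c' e' G) =
      lsub (a' * a + b' * c) (a' * b + b' * e) (c' * a + e' * c) (c' * b + e' * e) G := by
  have h : (lsub a b c e).comp (lsub a' b' c' e') =
      lsub (a' * a + b' * c) (a' * b + b' * e) (c' * a + e' * c) (c' * b + e' * e) := by
    apply MvPolynomial.algHom_ext
    intro i
    fin_cases i <;> simp [lsub, map_add, map_mul] <;> ring
  exact AlgHom.congr_fun h G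

lemma lsub_id (G : MvPolynomial (Fin 2) F) : lsub 1 0 0 1 G = G := by
  have h : (![C 1 * X 0 + C 0 * X 1, C 0 * X 0 + C 1 * X 1] : Fin 2 → MvPolynomial (Fin 2) F)
      = X := by
    funext i; fin_cases i <;> simp
  rw [lsub, h, aeval_X_left_apply]

/-- Core divisibility: vanishing at `(0,1)` gives a factor `X 0`. -/
lemma X0_dvd {m : ℕ} (hG : G.IsHomogeneous (m + 1)) (h : eval ![0, 1] G = 0) :
    ∃ h', h'.IsHomogeneous m ∧ G = X 0 * h' := by
  classical
  -- step 1 : the coefficient of `X 1 ^ (m+1)` vanishes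
  have hcoeff : coeff (Finsupp.single 1 (m + 1)) G = 0 := by
    have heval : eval ![(0:F), 1] G = coeff (Finsupp.single 1 (m + 1)) G := by
      rw [eval_eq']
      rw [Finset.sum_eq_single (Finsupp.single 1 (m + 1))]
      · simp
      · intro d hd hne
        have hd0 : d 0 ≠ 0 := by
          intro hd0
          apply hne
          have hsum : d 0 + d 1 = m + 1 := by
            have := hG (mem_support_iff.mp hd)
            rw [weight_eq_sum] at this
            simpa [Fin.sum_univ_two] using this
          have hd1 : d 1 = m + 1 := by omega
          ext i
          fin_cases i <;> simp [hd0, hd1, Finsupp.single_apply]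
        simp [Fin.prod_univ_two, zero_pow hd0]
      · intro hnotmem
        rw [notMem_support_iff.mp hnotmem, zero_mul]
    rw [← heval, h]
  -- step 2 : `X 0 ∣ G`
  have hdvd : X (R := F) 0 ∣ G := by
    rw [X_dvd_iff_modMonomial_eq_zero]
    ext d
    by_cases hle : Finsupp.single 0 1 ≤ d
    · rw [coeff_modMonomial_of_le _ hle, coeff_zero]
    · rw [coeff_modMonomial_of_not_le _ hle, coeff_zero]
      by_contra hne
      have hd0 : d 0 = 0 := by
        have := Finsupp.single_le_iff.not.mp hle
        omega
      have hsum : d 0 + d 1 = m + 1 := by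
        have := hG hne
        rw [weight_eq_sum] at this
        simpa [Fin.sum_univ_two] using this
      have : d = Finsupp.single 1 (m + 1) := by
        ext i
        fin_cases i <;> simp [hd0, Finsupp.single_apply] <;> omega
      rw [this] at hne
      exact hne hcoeff
  obtain ⟨h', rfl⟩ := hdvd
  refine ⟨h', ?_, rfl⟩
  -- step 3 : homogeneity of the quotient
  intro d hd
  have h2 : coeff (Finsupp.single 0 1 + d) (X 0 * h') ≠ 0 := by
    rwa [coeff_X_mul]
  have h3 := hG h2
  rw [weight_eq_sum] at h3
  simp only [Fin.sum_univ_two, Finsupp.add_apply, Finsupp.single_apply] at h3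
  norm_num at h3
  rw [weight_eq_sum]
  simp only [Fin.sum_univ_two]
  omega

lemma lin_dvd_gen {m : ℕ} (hG : G.IsHomogeneous (m + 1)) (a c : F) {w : Fin 2 → F}
    (hdet : a * w 1 - w 0 * c ≠ 0) (h : eval w G = 0) :
    ∃ h', h'.IsHomogeneous m ∧ G = lin w * h' := by
  set dt := a * w 1 - w 0 * c with hdt
  -- forward substitution
  have hS : eval ![(0:F), 1] (lsub a (w 0) c (w 1) G) = 0 := by
    have h5 := eval_lsub a (w 0) c (w 1) ![0, 1] G
    simp only [Matrix.cons_val_zero, Matrix.cons_val_one, Matrix.head_cons, mul_zero,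
      mul_one, zero_add] at h5
    rw [h5]
    have hv : (![w 0, w 1] : Fin 2 → F) = w := by funext i; fin_cases i <;> simp
    rw [hv, h]
  obtain ⟨h₁, hh₁, hfac⟩ := X0_dvd (lsub_isHomogeneous hG) hS
  -- inverse substitution
  set T := lsub (w 1 / dt) (-(w 0) / dt) (-c / dt) (a / dt) with hT
  have hTS : T (lsub a (w 0) c (w 1) G) = G := by
    rw [hT, lsub_lsub]
    have e1 : a * (w 1 / dt) + w 0 * (-c / dt) = 1 := by field_simp [hdt]; ring
    have e2 : a * (-(w 0) / dt) + w 0 * (a / dt) = 0 := by field_simp; ring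
    have e3 : c * (w 1 / dt) + w 1 * (-c / dt) = 0 := by field_simp; ring
    have e4 : c * (-(w 0) / dt) + w 1 * (a / dt) = 1 := by field_simp [hdt]; ring
    rw [e1, e2, e3, e4, lsub_id]
  have hG' : G = T (X 0) * T h₁ := by
    rw [← map_mul, ← hfac, hTS]
  have hTX : T (X 0) = C (dt⁻¹) * lin w := by
    rw [hT, lsub_X0, lin]
    rw [div_eq_mul_inv, div_eq_mul_inv, map_mul, map_mul, map_neg]
    ring
  refine ⟨C (dt⁻¹) * T h₁, ?_, ?_⟩
  · have := (lsub_isHomogeneous (a := w 1 / dt) (b := -(w 0) / dt) (c := -c / dt)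
      (e := a / dt) hh₁).C_mul (dt⁻¹)
    exact this
  · rw [hG', hTX]; ring

lemma lin_dvd {m : ℕ} (hG : G.IsHomogeneous (m + 1)) {w : Fin 2 → F} (hw : w ≠ 0)
    (h : eval w G = 0) : ∃ h', h'.IsHomogeneous m ∧ G = lin w * h' := by
  rcases eq_or_ne (w 1) 0 with h1 | h1
  · have h0 : w 0 ≠ 0 := by rcases vec_cases hw with h' | h'; exact h'; exact absurd h1 h'
    exact lin_dvd_gen hG 0 (-1) (by simpa [h1] using h0) h
  · exact lin_dvd_gen hG 1 0 (by simpa using h1) h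

lemma isHomogeneous_zero_eq_C (hG : G.IsHomogeneous 0) : G = C (constantCoeff G) := by
  classical
  ext d
  rcases eq_or_ne d 0 with rfl | hd
  · simp [constantCoeff_eq]
  · rw [hG.coeff_eq_zero (by rwa [Ne, Finsupp.degree_eq_zero_iff]), coeff_C,
      if_neg (by exact fun h => hd h.symm)]

lemma eq_C_mul_lin_pow [IsAlgClosed F] {w : Fin 2 → F} (hw : w ≠ 0) :
    ∀ (n : ℕ) (G : MvPolynomial (Fin 2) F), G.IsHomogeneous n → G ≠ 0 →
    (∀ v : Fin 2 → F, v ≠ 0 → eval v G = 0 → ∃ t : F, t • w = v) →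
    ∃ c : F, c ≠ 0 ∧ G = C c * lin w ^ n := by
  intro n
  induction n with
  | zero =>
    intro G hG hG0 _
    refine ⟨constantCoeff G, ?_, by simpa using isHomogeneous_zero_eq_C hG⟩
    intro hc
    exact hG0 (by rw [isHomogeneous_zero_eq_C hG, hc, map_zero])
  | succ m IH =>
    intro G hG hG0 hroots
    obtain ⟨v, hv, hev⟩ := exists_root hG (by omega)
    obtain ⟨t, ht⟩ := hroots v hv hev
    have ht0 : t ≠ 0 := by rintro rfl; rw [zero_smul] at ht; exact hv ht.symm
    have hew : eval w G = 0 := by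
      have := eval_smul hG t w
      rw [ht, hev] at this
      exact (mul_eq_zero.mp this.symm).resolve_left (pow_ne_zero _ ht0)
    obtain ⟨h', hh', rfl⟩ := lin_dvd hG hw hew
    have hh0 : h' ≠ 0 := by rintro rfl; exact hG0 (mul_zero _)
    have hroots' : ∀ u : Fin 2 → F, u ≠ 0 → eval u h' = 0 → ∃ t : F, t • w = u :=
      fun u hu heu => hroots u hu (by rw [eval_mul, heu, mul_zero])
    obtain ⟨c, hc, hceq⟩ := IH h' hh' hh0 hroots'
    exact ⟨c, hc, by rw [hceq, pow_succ]; ring⟩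

-- ### the projective layer
noncomputable def gfix (Φ : Fin 2 → MvPolynomial (Fin 2) F) : MvPolynomial (Fin 2) F :=
  X 0 * Φ 1 - X 1 * Φ 0

noncomputable def gfib (Φ : Fin 2 → MvPolynomial (Fin 2) F) (w : Fin 2 → F) :
    MvPolynomial (Fin 2) F :=
  C (w 1) * Φ 0 - C (w 0) * Φ 1

def Zset (G : MvPolynomial (Fin 2) F) : Set (P1 F) := {p | eval p.rep G = 0}

lemma gfix_isHomogeneous (hhom : ∀ i, (Φ i).IsHomogeneous d) :
    (gfix Φ).IsHomogeneous (d + 1) := by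
  have h0 := (isHomogeneous_X F (0 : Fin 2)).mul (hhom 1)
  have h1 := (isHomogeneous_X F (1 : Fin 2)).mul (hhom 0)
  rw [add_comm] at h0 h1
  exact h0.sub h1

lemma gfib_isHomogeneous (hhom : ∀ i, (Φ i).IsHomogeneous d) (w : Fin 2 → F) :
    (gfib Φ w).IsHomogeneous d :=
  ((hhom 0).C_mul _).sub ((hhom 1).C_mul _)

lemma eval_gfix (v : Fin 2 → F) :
    eval v (gfix Φ) = v 0 * eval v (Φ 1) - v 1 * eval v (Φ 0) := by simp [gfix]

lemma eval_gfib (w v : Fin 2 → F) :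
    eval v (gfib Φ w) = w 1 * eval v (Φ 0) - w 0 * eval v (Φ 1) := by simp [gfib]

lemma mem_Zset_mk {G : MvPolynomial (Fin 2) F} (hG : G.IsHomogeneous n)
    {v : Fin 2 → F} (hv : v ≠ 0) :
    Projectivization.mk F v hv ∈ Zset G ↔ eval v G = 0 := by
  obtain ⟨a, ha⟩ := Projectivization.exists_smul_eq_mk_rep F v hv
  have h : eval (Projectivization.mk F v hv).rep G = (a : F) ^ n * eval v G := by
    rw [← ha, Units.smul_def, eval_smul hG]
  simp only [Zset, Set.mem_setOf_eq, h]
  constructor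
  · intro h2
    rcases mul_eq_zero.mp h2 with h3 | h3
    · exact absurd h3 (pow_ne_zero _ a.ne_zero)
    · exact h3
  · intro h2; rw [h2, mul_zero]

lemma Zset_mem_of_eq {G : MvPolynomial (Fin 2) F} (hG : G.IsHomogeneous n)
    {v : Fin 2 → F} (hv : v ≠ 0) {p : P1 F} (hp : p ∈ Zset G)
    (he : p = Projectivization.mk F v hv) : eval v G = 0 :=
  (mem_Zset_mk hG hv).mp (he ▸ hp)

lemma Zset_finite [IsAlgClosed F] {G : MvPolynomial (Fin 2) F}
    (hG : G.IsHomogeneous n) (hG0 : G ≠ 0) : (Zset G : Set (P1 F)).Finite := by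
  have hsub : Zset G ⊆ insert (Projectivization.mk F ![1, 0] one_zero_ne)
      ((fun t => Projectivization.mk F ![t, 1] (t_one_ne t)) ''
        {t | (chart0 G).eval t = 0}) := by
    intro p hp
    induction p using Projectivization.ind with
    | h v hv =>
      by_cases h1 : v 1 = 0
      · left
        rw [Projectivization.mk_eq_mk_iff']
        exact ⟨v 0, (vec_decomp0 h1).symm⟩
      · right
        have hmk : Projectivization.mk F v hv
            = Projectivization.mk F ![v 0 / v 1, 1] (t_one_ne _) := by
          rw [Projectivization.mk_eq_mk_iff']
          exact ⟨v 1, (vec_decomp1 h1).symm⟩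
        refine ⟨v 0 / v 1, ?_, hmk.symm⟩
        have := Zset_mem_of_eq hG (t_one_ne (v 0 / v 1)) hp hmk
        simpa [Set.mem_setOf_eq, chart0_eval] using this
  exact Set.Finite.subset (Set.Finite.insert _ (Set.Finite.image _
    (Polynomial.finite_setOf_isRoot (chart0_ne_zero hG hG0)))) hsub

lemma Zset_nonempty [IsAlgClosed F] {G : MvPolynomial (Fin 2) F}
    (hG : G.IsHomogeneous n) (hn : 1 ≤ n) : (Zset G : Set (P1 F)).Nonempty := by
  obtain ⟨v, hv, hev⟩ := exists_root hG hn
  exact ⟨Projectivization.mk F v hv, (mem_Zset_mk hG hv).mpr hev⟩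

lemma parallel_iff {v N : Fin 2 → F} (hv : v ≠ 0) :
    v 0 * N 1 - v 1 * N 0 = 0 ↔ ∃ a : F, N = a • v := by
  constructor
  · intro h
    rcases vec_cases hv with h0 | h1
    · refine ⟨N 0 / v 0, ?_⟩
      funext i
      fin_cases i <;> simp only [Fin.zero_eta, Fin.mk_one, Pi.smul_apply, smul_eq_mul] <;> field_simp
      linear_combination h
    · refine ⟨N 1 / v 1, ?_⟩
      funext i
      fin_cases i <;> simp only [Fin.zero_eta, Fin.mk_one, Pi.smul_apply, smul_eq_mul] <;> field_simp
      linear_combination -h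
  · rintro ⟨a, rfl⟩
    simp only [Pi.smul_apply, smul_eq_mul]
    ring

lemma not_isUnit_of_homog [IsAlgClosed F] {ψ : MvPolynomial (Fin 2) F} {n : ℕ}
    (hn : 1 ≤ n) (h : ψ.IsHomogeneous n) : ¬ IsUnit ψ := by
  intro hu
  obtain ⟨v, hv, he⟩ := exists_root h hn
  exact (not_isUnit_zero : ¬ IsUnit (0 : F)) (he ▸ hu.map (eval v))

section Umbrella
variable [IsAlgClosed F] (hd : 2 ≤ d) (hhom : ∀ i, (Φ i).IsHomogeneous d)
  (hrel : IsRelPrime (Φ 0) (Φ 1))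
include hd hhom hrel

lemma N_ne_zero {v : Fin 2 → F} (hv : v ≠ 0) :
    (fun i => eval v (Φ i)) ≠ 0 := by
  intro h
  have h0 : eval v (Φ 0) = 0 := congrFun h 0
  have h1 : eval v (Φ 1) = 0 := congrFun h 1
  obtain ⟨m, hm⟩ : ∃ m, d = m + 1 := ⟨d - 1, by omega⟩
  obtain ⟨a0, _, ha0⟩ := lin_dvd (hm ▸ hhom 0) hv h0
  obtain ⟨a1, _, ha1⟩ := lin_dvd (hm ▸ hhom 1) hv h1
  exact not_isUnit_lin hv (hrel ⟨a0, ha0⟩ ⟨a1, ha1⟩)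

lemma evalMap_mk {v : Fin 2 → F} (hv : v ≠ 0) :
    evalMap Φ (Projectivization.mk F v hv)
      = Projectivization.mk F (fun i => eval v (Φ i)) (N_ne_zero hd hhom hrel hv) := by
  obtain ⟨a, ha⟩ := Projectivization.exists_smul_eq_mk_rep F v hv
  have hrep : (fun i => eval (Projectivization.mk F v hv).rep (Φ i))
      = ((a : F) ^ d) • (fun i => eval v (Φ i)) := by
    funext i
    rw [← ha, Units.smul_def, eval_smul (hhom i)]
    simp
  have hne : (fun i => eval (Projectivization.mk F v hv).rep (Φ i)) ≠ 0 := by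
    rw [hrep]
    exact smul_ne_zero (pow_ne_zero _ a.ne_zero) (N_ne_zero hd hhom hrel hv)
  rw [evalMap, dif_pos hne]
  rw [Projectivization.mk_eq_mk_iff]
  exact ⟨a ^ d, by rw [hrep, Units.smul_def, Units.val_pow_eq_pow_val]⟩

lemma gfib_ne_zero {w : Fin 2 → F} (hw : w ≠ 0) : gfib Φ w ≠ 0 := by
  intro h
  rw [gfib, sub_eq_zero] at h
  rcases vec_cases hw with h0 | h1
  · -- C w0 * Φ 1 = C w1 * Φ 0 : Φ 0 ∣ both sides
    have hdvd : Φ 0 ∣ Φ 1 := by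
      refine ⟨C (w 0)⁻¹ * C (w 1), ?_⟩
      have := congrArg (fun P => C (w 0)⁻¹ * P) h
      rw [← mul_assoc, ← mul_assoc, ← map_mul, ← map_mul, inv_mul_cancel₀ h0, map_one,
        one_mul] at this
      rw [← this, map_mul]; ring
    exact not_isUnit_of_homog (by omega) (hhom 0) (hrel dvd_rfl hdvd)
  · have hdvd : Φ 1 ∣ Φ 0 := by
      refine ⟨C (w 1)⁻¹ * C (w 0), ?_⟩
      have := congrArg (fun P => C (w 1)⁻¹ * P) h.symm
      rw [← mul_assoc, ← mul_assoc, ← map_mul, ← map_mul, inv_mul_cancel₀ h1, map_one,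
        one_mul] at this
      rw [← this, map_mul]; ring
    exact not_isUnit_of_homog (by omega) (hhom 1) (hrel hdvd dvd_rfl)

lemma gfix_ne_zero : gfix Φ ≠ 0 := by
  intro h
  rw [gfix, sub_eq_zero] at h
  -- h : X 0 * Φ 1 = X 1 * Φ 0
  have he : eval ![(0 : F), 1] (Φ 0) = 0 := by
    have := congrArg (eval ![(0 : F), 1]) h
    simpa using this.symm
  obtain ⟨m, hm⟩ : ∃ m, d = m + 1 := ⟨d - 1, by omega⟩
  obtain ⟨h', hh', heq⟩ := X0_dvd (hm ▸ hhom 0) he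
  have hΦ1 : Φ 1 = X 1 * h' := by
    have h2 : X (R := F) 0 * Φ 1 = X 0 * (X 1 * h') := by
      rw [h, heq]; ring
    exact mul_left_cancel₀ (X_ne_zero 0) h2
  have hu : IsUnit h' := hrel ⟨X 0, by rw [heq]; ring⟩ ⟨X 1, by rw [hΦ1]; ring⟩
  exact not_isUnit_of_homog (n := m) (by omega) hh' hu

lemma FixSet_eq : FixSet Φ = Zset (gfix Φ) := by
  apply Set.ext
  intro p
  induction p using Projectivization.ind with
  | h v hv =>
    rw [mem_Zset_mk (gfix_isHomogeneous hhom) hv]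
    simp only [FixSet, Set.mem_setOf_eq]
    rw [evalMap_mk hd hhom hrel hv, Projectivization.mk_eq_mk_iff']
    rw [eval_gfix]
    rw [parallel_iff hv (N := fun i => eval v (Φ i))]
    constructor
    · rintro ⟨a, ha⟩
      exact ⟨a, by rw [ha]⟩
    · rintro ⟨a, ha⟩
      exact ⟨a, by rw [← ha]⟩

lemma fiber_eq {w : Fin 2 → F} (hw : w ≠ 0) :
    evalMap Φ ⁻¹' {Projectivization.mk F w hw} = Zset (gfib Φ w) := by
  apply Set.ext
  intro p
  induction p using Projectivization.ind with
  | h v hv =>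
    rw [mem_Zset_mk (gfib_isHomogeneous hhom w) hv]
    simp only [Set.mem_preimage, Set.mem_singleton_iff]
    rw [evalMap_mk hd hhom hrel hv, Projectivization.mk_eq_mk_iff']
    rw [eval_gfib]
    have hpar := parallel_iff (v := w) (N := fun i => eval v (Φ i)) hw
    constructor
    · rintro ⟨a, ha⟩
      rw [sub_eq_zero]
      have h2 : w 0 * eval v (Φ 1) - w 1 * eval v (Φ 0) = 0 := hpar.mpr ⟨a, by rw [ha]⟩
      linear_combination -h2
    · intro h
      have h2 : w 0 * eval v (Φ 1) - w 1 * eval v (Φ 0) = 0 := by linear_combination -h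
      obtain ⟨a, ha⟩ := hpar.mp h2
      exact ⟨a, by rw [← ha]⟩

lemma fiber_nonempty (x : P1 F) : (evalMap Φ ⁻¹' {x}).Nonempty := by
  have hx : x = Projectivization.mk F x.rep x.rep_nonzero := (Projectivization.mk_rep x).symm
  rw [hx, fiber_eq hd hhom hrel x.rep_nonzero]
  exact Zset_nonempty (gfib_isHomogeneous hhom _) (by omega)

lemma fiber_finite (x : P1 F) : (evalMap Φ ⁻¹' {x}).Finite := by
  have hx : x = Projectivization.mk F x.rep x.rep_nonzero := (Projectivization.mk_rep x).symm
  rw [hx, fiber_eq hd hhom hrel x.rep_nonzero]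
  exact Zset_finite (gfib_isHomogeneous hhom _) (gfib_ne_zero hd hhom hrel x.rep_nonzero)

lemma preimage_finite {S : Set (P1 F)} (hS : S.Finite) :
    (evalMap Φ ⁻¹' S).Finite := by
  have h : evalMap Φ ⁻¹' S = ⋃ x ∈ S, evalMap Φ ⁻¹' {x} := by
    ext p; simp
  rw [h]
  exact Set.Finite.biUnion hS (fun x _ => fiber_finite hd hhom hrel x)

end Umbrella

lemma lin_apply_self' (w : Fin 2 → F) : eval w (lin w) = 0 := by
  rw [eval_lin]; ring

lemma lin_ne_zero {w : Fin 2 → F} (hw : w ≠ 0) : lin w ≠ 0 := by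
  intro h
  rcases vec_cases hw with h0 | h1
  · have h2 := congrArg (eval ![(0:F), 1]) h
    rw [eval_lin] at h2
    simp at h2
    exact h0 h2
  · have h2 := congrArg (eval ![(1:F), 0]) h
    rw [eval_lin] at h2
    simp at h2
    exact h1 h2

lemma card3 {α : Type*} {s : Set α} {x y z : α} (hs : s.Finite) (hx : x ∈ s)
    (hy : y ∈ s) (hz : z ∈ s) (hxy : x ≠ y) (hxz : x ≠ z) (hyz : y ≠ z) :
    3 ≤ s.ncard := by
  have h1 : ({x, y, z} : Set α).ncard = 3 :=
    Set.ncard_eq_three.mpr ⟨x, y, z, hxy, hxz, hyz, rfl⟩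
  have h2 : ({x, y, z} : Set α) ⊆ s := by
    intro u hu
    rcases hu with rfl | rfl | rfl
    exacts [hx, hy, hz]
  calc 3 = ({x, y, z} : Set α).ncard := h1.symm
    _ ≤ s.ncard := Set.ncard_le_ncard h2 hs

section Main
variable [IsAlgClosed F] (hd : 2 ≤ d) (hhom : ∀ i, (Φ i).IsHomogeneous d)
  (hrel : IsRelPrime (Φ 0) (Φ 1))
include hd hhom hrel

lemma partA (h2 : (FixSet Φ).ncard = 2) :
    3 ≤ (evalMap Φ ⁻¹' FixSet Φ).ncard := by
  obtain ⟨x, y, hxy, hFix⟩ := Set.ncard_eq_two.mp h2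
  have hxm : x ∈ FixSet Φ := by rw [hFix]; left; rfl
  have hym : y ∈ FixSet Φ := by rw [hFix]; right; rfl
  have hxf : evalMap Φ x = x := hxm
  have hyf : evalMap Φ y = y := hym
  have hxpre : x ∈ evalMap Φ ⁻¹' FixSet Φ := by
    simp only [Set.mem_preimage, hxf]; exact hxm
  have hypre : y ∈ evalMap Φ ⁻¹' FixSet Φ := by
    simp only [Set.mem_preimage, hyf]; exact hym
  have hthird : ∃ z, z ∈ evalMap Φ ⁻¹' FixSet Φ ∧ z ≠ x ∧ z ≠ y := by
    by_contra hcon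
    push_neg at hcon
    set w := x.rep with hwdef
    have hw : w ≠ 0 := x.rep_nonzero
    have hxmk : x = Projectivization.mk F w hw := (Projectivization.mk_rep x).symm
    set w' := y.rep with hwdef'
    have hw' : w' ≠ 0 := y.rep_nonzero
    have hymk : y = Projectivization.mk F w' hw' := (Projectivization.mk_rep y).symm
    -- the fiber over x is {x}
    have hfibx : ∀ v : Fin 2 → F, v ≠ 0 → eval v (gfib Φ w) = 0 → ∃ t : F, t • w = v := by
      intro v hv hev
      have hmem : Projectivization.mk F v hv ∈ evalMap Φ ⁻¹' {x} := by
        rw [hxmk, fiber_eq hd hhom hrel hw]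
        exact (mem_Zset_mk (gfib_isHomogeneous hhom w) hv).mpr hev
      have hmemx : evalMap Φ (Projectivization.mk F v hv) = x := hmem
      have hmem' : Projectivization.mk F v hv ∈ evalMap Φ ⁻¹' FixSet Φ := by
        simp only [Set.mem_preimage, hmemx]; exact hxm
      have heq : Projectivization.mk F v hv = x := by
        by_contra hne
        have h3 := hcon _ hmem' hne
        rw [h3] at hmemx
        rw [hyf] at hmemx
        exact hxy hmemx.symm
      rw [hxmk] at heq
      exact (Projectivization.mk_eq_mk_iff' F v w hv hw).mp heq
    have hfiby : ∀ v : Fin 2 → F, v ≠ 0 → eval v (gfib Φ w') = 0 → ∃ t : F, t • w' = v := by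
      intro v hv hev
      have hmem : Projectivization.mk F v hv ∈ evalMap Φ ⁻¹' {y} := by
        rw [hymk, fiber_eq hd hhom hrel hw']
        exact (mem_Zset_mk (gfib_isHomogeneous hhom w') hv).mpr hev
      have hmemy : evalMap Φ (Projectivization.mk F v hv) = y := hmem
      have hmem' : Projectivization.mk F v hv ∈ evalMap Φ ⁻¹' FixSet Φ := by
        simp only [Set.mem_preimage, hmemy]; exact hym
      have heq : Projectivization.mk F v hv = y := by
        by_contra hne
        rcases eq_or_ne (Projectivization.mk F v hv) x with h3 | h3
        · rw [h3, hxf] at hmemy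
          exact hxy hmemy
        · exact hne (hcon _ hmem' h3)
      rw [hymk] at heq
      exact (Projectivization.mk_eq_mk_iff' F v w' hv hw').mp heq
    obtain ⟨c, hc, e1⟩ := eq_C_mul_lin_pow hw d (gfib Φ w)
      (gfib_isHomogeneous hhom w) (gfib_ne_zero hd hhom hrel hw) hfibx
    obtain ⟨c', hc', e2⟩ := eq_C_mul_lin_pow hw' d (gfib Φ w')
      (gfib_isHomogeneous hhom w') (gfib_ne_zero hd hhom hrel hw') hfiby
    -- independence of w, w'
    have hδ : w 0 * w' 1 - w 1 * w' 0 ≠ 0 := by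
      intro h0
      obtain ⟨a, ha⟩ := (parallel_iff hw (N := w')).mp h0
      apply hxy.symm
      rw [hymk, hxmk, Projectivization.mk_eq_mk_iff']
      exact ⟨a, ha.symm⟩
    obtain ⟨m, hm⟩ : ∃ m, d = m + 2 := ⟨d - 2, by omega⟩
    rw [hm] at e1 e2
    -- the auxiliary form H
    have hLhom : ((lin w) ^ (m + 1)).IsHomogeneous (m + 1) := by
      have := (lin_isHomogeneous w).pow (m + 1); rwa [one_mul] at this
    have hMhom : ((lin w') ^ (m + 1)).IsHomogeneous (m + 1) := by
      have := (lin_isHomogeneous w').pow (m + 1); rwa [one_mul] at this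
    have hHhom : (C c * lin w ^ (m + 1) - C c' * lin w' ^ (m + 1)).IsHomogeneous (m + 1) :=
      (hLhom.C_mul c).sub (hMhom.C_mul c')
    obtain ⟨v, hv, hevH⟩ := exists_root hHhom (by omega)
    -- the key algebraic identity
    have key : C (w 1 * w' 0 - w 0 * w' 1) * gfix Φ =
        lin w * lin w' * (C c * lin w ^ (m + 1) - C c' * lin w' ^ (m + 1)) := by
      simp only [gfib, lin, map_sub, map_mul] at e1 e2 ⊢
      simp only [gfix]
      linear_combination (C (w' 1) * X 0 - C (w' 0) * X 1) * e1 -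
        (C (w 1) * X 0 - C (w 0) * X 1) * e2
    -- v gives a fixed point
    have hevFix : eval v (gfix Φ) = 0 := by
      have h4 := congrArg (eval v) key
      simp only [map_mul, map_sub, eval_C] at h4
      rw [map_pow, map_pow] at h4
      have h5 : eval v (C c * lin w ^ (m+1) - C c' * lin w' ^ (m+1)) = 0 := hevH
      simp only [map_sub, map_mul, map_pow, eval_C] at h5
      rw [h5, mul_zero] at h4
      rcases mul_eq_zero.mp h4 with h6 | h6
      · exact absurd h6 (by intro h7; apply hδ; linear_combination -h7)
      · exact h6
    have hvFix : Projectivization.mk F v hv ∈ FixSet Φ := by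
      rw [FixSet_eq hd hhom hrel]
      exact (mem_Zset_mk (gfix_isHomogeneous hhom) hv).mpr hevFix
    rw [hFix] at hvFix
    -- eval at w and w' of H are nonzero
    have hewM : eval w (lin w') = w 0 * w' 1 - w 1 * w' 0 := by rw [eval_lin]; ring
    have hew'L : eval w' (lin w) = -(w 0 * w' 1 - w 1 * w' 0) := by rw [eval_lin]; ring
    have hHw : eval w (C c * lin w ^ (m+1) - C c' * lin w' ^ (m+1)) ≠ 0 := by
      simp only [map_sub, map_mul, map_pow, eval_C, lin_apply_self', hewM]
      rw [zero_pow (by omega : m + 1 ≠ 0), mul_zero, zero_sub, neg_ne_zero]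
      exact mul_ne_zero hc' (pow_ne_zero _ hδ)
    have hHw' : eval w' (C c * lin w ^ (m+1) - C c' * lin w' ^ (m+1)) ≠ 0 := by
      simp only [map_sub, map_mul, map_pow, eval_C, lin_apply_self', hew'L]
      rw [zero_pow (by omega : m + 1 ≠ 0), mul_zero, sub_zero]
      exact mul_ne_zero hc (pow_ne_zero _ (fun h7 => hδ (by linear_combination -h7)))
    rcases hvFix with h7 | h7
    · rw [hxmk] at h7
      obtain ⟨a, ha⟩ := (Projectivization.mk_eq_mk_iff' F v w hv hw).mp h7
      have ha0 : a ≠ 0 := by rintro rfl; rw [zero_smul] at ha; exact hv ha.symm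
      rw [← ha, eval_smul hHhom] at hevH
      exact hHw ((mul_eq_zero.mp hevH).resolve_left (pow_ne_zero _ ha0))
    · rw [hymk] at h7
      obtain ⟨a, ha⟩ := (Projectivization.mk_eq_mk_iff' F v w' hv hw').mp h7
      have ha0 : a ≠ 0 := by rintro rfl; rw [zero_smul] at ha; exact hv ha.symm
      rw [← ha, eval_smul hHhom] at hevH
      exact hHw' ((mul_eq_zero.mp hevH).resolve_left (pow_ne_zero _ ha0))
  obtain ⟨z, hz, hzx, hzy⟩ := hthird
  have hfin : (evalMap Φ ⁻¹' FixSet Φ).Finite :=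
    preimage_finite hd hhom hrel (by rw [hFix]; exact (Set.finite_singleton y).insert x)
  exact card3 hfin hxpre hypre hz hxy (Ne.symm hzx) (Ne.symm hzy)

lemma partB (x : P1 F) (hFix : FixSet Φ = {x}) :
    2 ≤ (evalMap Φ ⁻¹' {x}).ncard ∧ 3 ≤ ((evalMap Φ)^[2] ⁻¹' {x}).ncard := by
  set w := x.rep with hwdef
  have hw : w ≠ 0 := x.rep_nonzero
  have hxmk : x = Projectivization.mk F w hw := (Projectivization.mk_rep x).symm
  have hxm : x ∈ FixSet Φ := by rw [hFix]; rfl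
  have hxf : evalMap Φ x = x := hxm
  have hxpre : x ∈ evalMap Φ ⁻¹' {x} := by
    simp only [Set.mem_preimage, hxf]; rfl
  have hsecond : ∃ z, z ∈ evalMap Φ ⁻¹' {x} ∧ z ≠ x := by
    by_contra hcon
    push_neg at hcon
    have hfibx : ∀ v : Fin 2 → F, v ≠ 0 → eval v (gfib Φ w) = 0 → ∃ t : F, t • w = v := by
      intro v hv hev
      have hmem : Projectivization.mk F v hv ∈ evalMap Φ ⁻¹' {x} := by
        rw [hxmk, fiber_eq hd hhom hrel hw]
        exact (mem_Zset_mk (gfib_isHomogeneous hhom w) hv).mpr hev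
      have heq := hcon _ hmem
      rw [hxmk] at heq
      exact (Projectivization.mk_eq_mk_iff' F v w hv hw).mp heq
    have hfixx : ∀ v : Fin 2 → F, v ≠ 0 → eval v (gfix Φ) = 0 → ∃ t : F, t • w = v := by
      intro v hv hev
      have hmem : Projectivization.mk F v hv ∈ FixSet Φ := by
        rw [FixSet_eq hd hhom hrel]
        exact (mem_Zset_mk (gfix_isHomogeneous hhom) hv).mpr hev
      rw [hFix, Set.mem_singleton_iff, hxmk] at hmem
      exact (Projectivization.mk_eq_mk_iff' F v w hv hw).mp hmem
    obtain ⟨c, hc, e1⟩ := eq_C_mul_lin_pow hw d (gfib Φ w)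
      (gfib_isHomogeneous hhom w) (gfib_ne_zero hd hhom hrel hw) hfibx
    obtain ⟨c', hc', e2⟩ := eq_C_mul_lin_pow hw (d + 1) (gfix Φ)
      (gfix_isHomogeneous hhom) (gfix_ne_zero hd hhom hrel) hfixx
    obtain ⟨m, hm⟩ : ∃ m, d = m + 2 := ⟨d - 2, by omega⟩
    rw [hm] at e1
    rw [hm, show m + 2 + 1 = m + 3 from rfl] at e2
    have hΦ0 : lin w * Φ 0 =
        lin w * (lin w * (C (w 0) * C c' * lin w ^ (m + 1) + C c * X 0 * lin w ^ m)) := by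
      simp only [gfib, gfix, lin, map_sub, map_mul] at e1 e2 ⊢
      linear_combination (C (w 0)) * e2 + X 0 * e1
    have hΦ1 : lin w * Φ 1 =
        lin w * (lin w * (C (w 1) * C c' * lin w ^ (m + 1) + C c * X 1 * lin w ^ m)) := by
      simp only [gfib, gfix, lin, map_sub, map_mul] at e1 e2 ⊢
      linear_combination (C (w 1)) * e2 + X 1 * e1
    have hd0 : lin w ∣ Φ 0 := ⟨_, mul_left_cancel₀ (lin_ne_zero hw) hΦ0⟩
    have hd1 : lin w ∣ Φ 1 := ⟨_, mul_left_cancel₀ (lin_ne_zero hw) hΦ1⟩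
    exact not_isUnit_lin hw (hrel hd0 hd1)
  obtain ⟨z, hz, hzx⟩ := hsecond
  have hzfx : evalMap Φ z = x := hz
  have hfinx : (evalMap Φ ⁻¹' {x}).Finite := fiber_finite hd hhom hrel x
  constructor
  · have hsub : ({z, x} : Set (P1 F)) ⊆ evalMap Φ ⁻¹' {x} := by
      intro u hu
      rcases hu with rfl | rfl
      exacts [hz, hxpre]
    calc 2 = ({z, x} : Set (P1 F)).ncard := (Set.ncard_pair hzx).symm
      _ ≤ _ := Set.ncard_le_ncard hsub hfinx
  · have hiter : (evalMap Φ)^[2] ⁻¹' {x} = evalMap Φ ⁻¹' (evalMap Φ ⁻¹' {x}) := by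
      have h9 : (evalMap Φ)^[2] = evalMap Φ ∘ evalMap Φ := by
        funext p
        simp [Function.iterate_succ, Function.comp]
      rw [h9, Set.preimage_comp]
    obtain ⟨u, hu⟩ := fiber_nonempty hd hhom hrel z
    have huz : evalMap Φ u = z := hu
    have hxmem : x ∈ (evalMap Φ)^[2] ⁻¹' {x} := by
      rw [hiter]
      simp only [Set.mem_preimage, hxf]
      rfl
    have hzmem : z ∈ (evalMap Φ)^[2] ⁻¹' {x} := by
      rw [hiter]
      simp only [Set.mem_preimage, hzfx, hxf]
      rfl
    have humem : u ∈ (evalMap Φ)^[2] ⁻¹' {x} := by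
      rw [hiter]
      simp only [Set.mem_preimage, huz, hzfx]
      rfl
    have hux : u ≠ x := by
      intro h9; rw [h9, hxf] at huz; exact hzx huz.symm
    have huzne : u ≠ z := by
      intro h9; rw [h9, hzfx] at huz; exact hzx huz.symm
    have hfin2 : ((evalMap Φ)^[2] ⁻¹' {x}).Finite := by
      rw [hiter]
      exact preimage_finite hd hhom hrel hfinx
    exact card3 hfin2 hxmem hzmem humem (Ne.symm hzx) (Ne.symm hux) (Ne.symm huzne)

lemma partC : 3 ≤ (Tset Φ).ncard := by
  by_cases h3 : 3 ≤ (FixSet Φ).ncard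
  · unfold Tset
    rw [if_pos h3]
    exact h3
  · by_cases h2 : (FixSet Φ).ncard = 2
    · unfold Tset
      rw [if_neg h3, if_pos h2]
      exact partA hd hhom hrel h2
    · have hfinF : (FixSet Φ).Finite := by
        rw [FixSet_eq hd hhom hrel]
        exact Zset_finite (gfix_isHomogeneous hhom) (gfix_ne_zero hd hhom hrel)
      have hne : (FixSet Φ).Nonempty := by
        rw [FixSet_eq hd hhom hrel]
        exact Zset_nonempty (gfix_isHomogeneous hhom) (by omega)
      have h1 : (FixSet Φ).ncard = 1 := by
        have hpos : 0 < (FixSet Φ).ncard := (Set.ncard_pos hfinF).mpr hne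
        omega
      obtain ⟨x, hx⟩ := Set.ncard_eq_one.mp h1
      unfold Tset
      rw [if_neg h3, if_neg h2, hx]
      exact (partB hd hhom hrel x hx).2

end Main

end AuxInv

/-- over an algebraically closed field, if `φ` has exactly two
fixed points then their preimage set has at least three elements; if it has a
unique fixed point `x` then `φ⁻¹(x)` has at least two and `φ⁻²(x)` at least
three elements; consequently the invariant set `T_φ` always has at least three
elements. -/
theorem invariant_set_has_three_points
    {F : Type*} [Field F] [IsAlgClosed F]
    (d : ℕ) (hd : 2 ≤ d)
    (Φ : Fin 2 → MvPolynomial (Fin 2) F)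
    (hhom : ∀ i, (Φ i).IsHomogeneous d)
    (hrel : IsRelPrime (Φ 0) (Φ 1)) :
    ((FixSet Φ).ncard = 2 → 3 ≤ (evalMap Φ ⁻¹' FixSet Φ).ncard) ∧
    (∀ x : P1 F, FixSet Φ = {x} →
      2 ≤ (evalMap Φ ⁻¹' {x}).ncard ∧ 3 ≤ ((evalMap Φ)^[2] ⁻¹' {x}).ncard) ∧
    3 ≤ (Tset Φ).ncard :=
  ⟨AuxInv.partA hd hhom hrel, AuxInv.partB hd hhom hrel, AuxInv.partC hd hhom hrel⟩
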